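/- Let d ≥ 3 be an integer and F_d(s) = ∫_0^π cos θ · sin^{d-3} θ / (2(1−cos θ) + s)^{d/2−1} dθ. Then there is a constant C depending only on d such that |F_d'(s)| ≤ C · min{1/s, 1/s^{d/2+1}} for all s > 0. -/

import Mathlib

open intervalIntegral Real MeasureTheory Metric Filter

private lemma U_pos {s : ℝ} (hs : 0 < s) (θ : ℝ) : 0 < 2 * (1 - Real.cos θ) + s := by
  nlinarith [Real.cos_le_one θ]

private lemma U_cont {s : ℝ} (hs : 0 < s) (p : ℝ) :
    Continuous fun θ : ℝ => (2 * (1 - Real.cos θ) + s) ^ p := by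
  apply Continuous.rpow_const (by continuity)
  intro θ; exact Or.inl (ne_of_gt (U_pos hs θ))

private lemma U_hasDeriv (s : ℝ) (θ : ℝ) :
    HasDerivAt (fun θ : ℝ => 2 * (1 - Real.cos θ) + s) (2 * Real.sin θ) θ := by
  have h := (((Real.hasDerivAt_cos θ).const_sub 1).const_mul (2:ℝ)).add_const s
  refine h.congr_deriv ?_
  ring

private lemma step1 (d : ℕ) (hd : 3 ≤ d) {s : ℝ} (hs : 0 < s) :
    (∫ θ in (0:ℝ)..Real.pi, Real.cos θ * Real.sin θ ^ (d - 3) /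
        (2 * (1 - Real.cos θ) + s) ^ ((d : ℝ) / 2 - 1))
      = ∫ θ in (0:ℝ)..Real.pi,
        Real.sin θ ^ (d - 1) * (2 * (1 - Real.cos θ) + s) ^ (-((d : ℝ) / 2)) := by
  have hd2 : ((d:ℕ) - 2 : ℕ) ≠ 0 := by omega
  have hcast : (((d - 2 : ℕ)) : ℝ) = (d : ℝ) - 2 := by
    push_cast [Nat.cast_sub (by omega : 2 ≤ d)]; ring
  have hdR : (d : ℝ) - 2 ≠ 0 := by
    have : (3:ℝ) ≤ (d:ℝ) := by exact_mod_cast hd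
    linarith
  set A : ℝ → ℝ := fun θ => (2 * (1 - Real.cos θ) + s) ^ (1 - (d : ℝ) / 2) with hA
  set A' : ℝ → ℝ := fun θ =>
    (1 - (d : ℝ) / 2) * (2 * (1 - Real.cos θ) + s) ^ (1 - (d : ℝ) / 2 - 1) * (2 * Real.sin θ)
    with hA'
  set B : ℝ → ℝ := fun θ => Real.sin θ ^ (d - 2) / ((d : ℝ) - 2) with hB
  set B' : ℝ → ℝ := fun θ => Real.cos θ * Real.sin θ ^ (d - 3) with hB'
  have hAder : ∀ θ ∈ Set.uIcc (0:ℝ) Real.pi, HasDerivAt A (A' θ) θ := by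
    intro θ _
    have h := (U_hasDeriv s θ).rpow_const (p := 1 - (d : ℝ) / 2) (Or.inl (U_pos hs θ).ne')
    convert h using 1
    simp only [hA']
    ring
  have hBder : ∀ θ ∈ Set.uIcc (0:ℝ) Real.pi, HasDerivAt B (B' θ) θ := by
    intro θ _
    have h := ((Real.hasDerivAt_sin θ).pow (d - 2)).div_const ((d : ℝ) - 2)
    refine h.congr_deriv ?_
    rw [show d - 2 - 1 = d - 3 by omega, hcast]
    field_simp
    ring
  have hA'int : IntervalIntegrable A' volume 0 Real.pi := by
    apply Continuous.intervalIntegrable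
    exact (continuous_const.mul (U_cont hs _)).mul (continuous_const.mul Real.continuous_sin)
  have hB'int : IntervalIntegrable B' volume 0 Real.pi := by
    apply Continuous.intervalIntegrable
    exact Real.continuous_cos.mul (Real.continuous_sin.pow _)
  have ibp := intervalIntegral.integral_mul_deriv_eq_deriv_mul hAder hBder hA'int hB'int
  have hB0 : B 0 = 0 := by
    simp [hB, zero_pow (show d - 2 ≠ 0 by omega)]
  have hBπ : B Real.pi = 0 := by
    simp [hB, zero_pow (show d - 2 ≠ 0 by omega)]
  have lhs_eq : (∫ θ in (0:ℝ)..Real.pi, Real.cos θ * Real.sin θ ^ (d - 3) /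
        (2 * (1 - Real.cos θ) + s) ^ ((d : ℝ) / 2 - 1))
      = ∫ θ in (0:ℝ)..Real.pi, A θ * B' θ := by
    apply intervalIntegral.integral_congr
    intro θ _
    have hU := U_pos hs θ
    simp only [hA, hB']
    rw [show (1 - (d:ℝ)/2) = -((d:ℝ)/2 - 1) by ring, Real.rpow_neg hU.le]
    field_simp
  rw [lhs_eq, ibp, hB0, hBπ]
  rw [mul_zero, mul_zero, sub_zero, zero_sub, ← intervalIntegral.integral_neg]
  apply intervalIntegral.integral_congr
  intro θ _
  have hU := U_pos hs θ
  simp only [hA', hB]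
  rw [show (1 - (d:ℝ)/2 - 1) = -((d:ℝ)/2) by ring]
  rw [show d - 1 = (d - 2) + 1 by omega, pow_succ]
  field_simp
  ring

private lemma step2 (d : ℕ) (hd : 3 ≤ d) {s : ℝ} (hs : 0 < s) :
    HasDerivAt (fun x : ℝ => ∫ θ in (0:ℝ)..Real.pi,
        Real.sin θ ^ (d - 1) * (2 * (1 - Real.cos θ) + x) ^ (-((d : ℝ) / 2)))
      (∫ θ in (0:ℝ)..Real.pi, Real.sin θ ^ (d - 1) *
        (-((d : ℝ) / 2) * (2 * (1 - Real.cos θ) + s) ^ (-((d : ℝ) / 2) - 1))) s := by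
  have hε : (0:ℝ) < s / 2 := by linarith
  have hballpos : ∀ x ∈ ball s (s/2), 0 < x := by
    intro x hx
    rw [mem_ball, Real.dist_eq, abs_lt] at hx
    linarith [hx.1]
  have hUx : ∀ x ∈ ball s (s/2), ∀ θ : ℝ, s / 2 < 2 * (1 - Real.cos θ) + x := by
    intro x hx θ
    rw [mem_ball, Real.dist_eq, abs_lt] at hx
    nlinarith [Real.cos_le_one θ]
  have key := intervalIntegral.hasDerivAt_integral_of_dominated_loc_of_deriv_le
    (μ := volume) (a := (0:ℝ)) (b := Real.pi) (x₀ := s) (s := ball s (s/2))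
    (F := fun x θ => Real.sin θ ^ (d - 1) * (2 * (1 - Real.cos θ) + x) ^ (-((d : ℝ) / 2)))
    (F' := fun x θ => Real.sin θ ^ (d - 1) *
        (-((d : ℝ) / 2) * (2 * (1 - Real.cos θ) + x) ^ (-((d : ℝ) / 2) - 1)))
    (bound := fun _ => ((d : ℝ) / 2) * (s / 2) ^ (-((d : ℝ) / 2) - 1))
    (ball_mem_nhds s hε) ?meas ?int ?meas' ?bdd ?bint ?diff
  · exact key.2
  case meas =>
    filter_upwards [Ioi_mem_nhds hs] with x hx
    exact ((Real.continuous_sin.pow _).mul (U_cont hx _)).aestronglyMeasurable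
  case int =>
    exact ((Real.continuous_sin.pow _).mul (U_cont hs _)).intervalIntegrable _ _
  case meas' =>
    exact ((Real.continuous_sin.pow _).mul
      (continuous_const.mul (U_cont hs _))).aestronglyMeasurable
  case bdd =>
    apply Filter.Eventually.of_forall
    intro θ _ x hx
    have hU : 0 < 2 * (1 - Real.cos θ) + x := lt_trans hε (hUx x hx θ)
    have h1 : |Real.sin θ ^ (d - 1)| ≤ 1 := by
      rw [abs_pow]
      exact pow_le_one₀ (abs_nonneg _) (Real.abs_sin_le_one θ)
    have h2 : (2 * (1 - Real.cos θ) + x) ^ (-((d : ℝ) / 2) - 1)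
        ≤ (s / 2) ^ (-((d : ℝ) / 2) - 1) := by
      apply Real.rpow_le_rpow_of_nonpos hε (hUx x hx θ).le
      have : (0:ℝ) ≤ (d : ℝ) / 2 := by positivity
      linarith
    have h3 : (0:ℝ) ≤ (2 * (1 - Real.cos θ) + x) ^ (-((d : ℝ) / 2) - 1) :=
      Real.rpow_nonneg hU.le _
    rw [Real.norm_eq_abs, abs_mul, abs_mul, abs_neg, abs_of_nonneg (by positivity :
      (0:ℝ) ≤ (d:ℝ)/2), abs_of_nonneg h3]
    calc |Real.sin θ ^ (d-1)| * ((d:ℝ)/2 * (2 * (1 - Real.cos θ) + x) ^ (-((d : ℝ) / 2) - 1))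
        ≤ 1 * ((d:ℝ)/2 * (s/2) ^ (-((d : ℝ) / 2) - 1)) := by
          apply mul_le_mul h1 _ (by positivity) one_pos.le
          exact mul_le_mul_of_nonneg_left h2 (by positivity)
      _ = ((d:ℝ)/2) * (s/2) ^ (-((d : ℝ) / 2) - 1) := by ring
  case bint => exact intervalIntegrable_const
  case diff =>
    apply Filter.Eventually.of_forall
    intro θ _ x hx
    have hU : 0 < 2 * (1 - Real.cos θ) + x := lt_trans hε (hUx x hx θ)
    have hinner : HasDerivAt (fun x : ℝ => 2 * (1 - Real.cos θ) + x) 1 x :=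
      (hasDerivAt_id x).const_add (2 * (1 - Real.cos θ))
    have h := (hinner.rpow_const (p := -((d : ℝ) / 2)) (Or.inl hU.ne')).const_mul
      (Real.sin θ ^ (d - 1))
    refine h.congr_deriv ?_
    ring

private lemma step3 {s : ℝ} (hs : 0 < s) :
    ∫ θ in (0:ℝ)..Real.pi, (θ ^ 2 + s) ^ (-(3:ℝ)/2) ≤ 1 / s := by
  have hder : ∀ θ ∈ Set.uIcc (0:ℝ) Real.pi,
      HasDerivAt (fun θ : ℝ => θ * (θ ^ 2 + s) ^ (-(1:ℝ)/2) / s) ((θ ^ 2 + s) ^ (-(3:ℝ)/2)) θ := by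
    intro θ _
    have hb : (0:ℝ) < θ ^ 2 + s := by positivity
    have h1 : HasDerivAt (fun θ : ℝ => θ ^ 2 + s) (2 * θ) θ := by
      simpa using (hasDerivAt_pow 2 θ).add_const s
    have h2 := h1.rpow_const (p := -(1:ℝ)/2) (Or.inl hb.ne')
    have h3 := ((hasDerivAt_id' (x := θ)).mul h2).div_const s
    refine h3.congr_deriv ?_
    have e1 : (θ ^ 2 + s) ^ (-(1:ℝ)/2) = (θ ^ 2 + s) ^ (-(3:ℝ)/2) * (θ ^ 2 + s) := by
      rw [← Real.rpow_add_one hb.ne']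
      norm_num
    rw [show (-(1:ℝ)/2 - 1) = (-(3:ℝ)/2) by norm_num, e1]
    field_simp
    ring
  have hint : IntervalIntegrable (fun θ : ℝ => (θ ^ 2 + s) ^ (-(3:ℝ)/2)) volume 0 Real.pi := by
    apply Continuous.intervalIntegrable
    apply Continuous.rpow_const (by continuity)
    intro θ; exact Or.inl (by positivity)
  rw [intervalIntegral.integral_eq_sub_of_hasDerivAt hder hint]
  have h4 : (Real.pi ^ 2 + s) ^ (-(1:ℝ)/2) ≤ (Real.pi ^ 2) ^ (-(1:ℝ)/2) := by
    apply Real.rpow_le_rpow_of_nonpos (by positivity) (by linarith) (by norm_num)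
  have h5 : ((Real.pi ^ 2 : ℝ)) ^ (-(1:ℝ)/2) = Real.pi⁻¹ := by
    rw [← Real.rpow_natCast Real.pi 2, ← Real.rpow_mul Real.pi_pos.le]
    norm_num [Real.rpow_neg_one]
  have h6 : Real.pi * (Real.pi ^ 2 + s) ^ (-(1:ℝ)/2) ≤ 1 := by
    calc Real.pi * (Real.pi ^ 2 + s) ^ (-(1:ℝ)/2)
        ≤ Real.pi * Real.pi⁻¹ := by
          rw [← h5]; exact mul_le_mul_of_nonneg_left h4 Real.pi_pos.le
      _ = 1 := mul_inv_cancel₀ Real.pi_ne_zero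
  simp only [zero_mul, zero_div, sub_zero]
  rw [div_le_div_iff₀ (by positivity) hs]
  nlinarith [h6, hs]

private lemma step4 (d : ℕ) (hd : 3 ≤ d) {s : ℝ} (hs : 0 < s) :
    ∫ θ in (0:ℝ)..Real.pi,
        Real.sin θ ^ (d - 1) * (2 * (1 - Real.cos θ) + s) ^ (-((d : ℝ) / 2) - 1)
      ≤ ((4:ℝ) / Real.pi ^ 2) ^ (-(3:ℝ)/2) * (1 / s) := by
  set K : ℝ := ((4:ℝ) / Real.pi ^ 2) ^ (-(3:ℝ)/2) with hK
  have hKpos : 0 < K := Real.rpow_pos_of_pos (by positivity) _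
  have hπ2 : (4:ℝ) ≤ Real.pi ^ 2 := by nlinarith [Real.pi_gt_three]
  have hint1 : IntervalIntegrable (fun θ : ℝ =>
      Real.sin θ ^ (d - 1) * (2 * (1 - Real.cos θ) + s) ^ (-((d : ℝ) / 2) - 1))
      volume 0 Real.pi :=
    ((Real.continuous_sin.pow _).mul (U_cont hs _)).intervalIntegrable _ _
  have hint2 : IntervalIntegrable (fun θ : ℝ => K * (θ ^ 2 + s) ^ (-(3:ℝ)/2))
      volume 0 Real.pi := by
    apply Continuous.intervalIntegrable
    apply continuous_const.mul
    apply Continuous.rpow_const (by continuity)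
    intro θ; exact Or.inl (by positivity)
  have hmono : ∫ θ in (0:ℝ)..Real.pi,
        Real.sin θ ^ (d - 1) * (2 * (1 - Real.cos θ) + s) ^ (-((d : ℝ) / 2) - 1)
      ≤ ∫ θ in (0:ℝ)..Real.pi, K * (θ ^ 2 + s) ^ (-(3:ℝ)/2) := by
    apply intervalIntegral.integral_mono_on Real.pi_pos.le hint1 hint2
    intro θ hθ
    have hU : 0 < 2 * (1 - Real.cos θ) + s := U_pos hs θ
    have hsin0 : 0 ≤ Real.sin θ := Real.sin_nonneg_of_nonneg_of_le_pi hθ.1 hθ.2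
    have hsinsq : Real.sin θ ^ 2 ≤ 2 * (1 - Real.cos θ) + s := by
      nlinarith [Real.sin_sq_add_cos_sq θ, Real.neg_one_le_cos θ, Real.cos_le_one θ]
    have hsin_le : Real.sin θ ≤ (2 * (1 - Real.cos θ) + s) ^ ((1:ℝ)/2) := by
      rw [← Real.sqrt_eq_rpow]
      exact (Real.le_sqrt hsin0 hU.le).mpr hsinsq
    have hpow : Real.sin θ ^ (d - 1) ≤ (2 * (1 - Real.cos θ) + s) ^ (((d:ℝ) - 1)/2) := by
      calc Real.sin θ ^ (d - 1)
          ≤ ((2 * (1 - Real.cos θ) + s) ^ ((1:ℝ)/2)) ^ (d - 1) :=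
            pow_le_pow_left₀ hsin0 hsin_le _
        _ = (2 * (1 - Real.cos θ) + s) ^ (((d:ℝ) - 1)/2) := by
            rw [← Real.rpow_natCast (_ ^ ((1:ℝ)/2)) (d - 1), ← Real.rpow_mul hU.le]
            congr 1
            push_cast [Nat.cast_sub (by omega : 1 ≤ d)]
            ring
    have hstep : Real.sin θ ^ (d - 1) * (2 * (1 - Real.cos θ) + s) ^ (-((d : ℝ) / 2) - 1)
        ≤ (2 * (1 - Real.cos θ) + s) ^ (-(3:ℝ)/2) := by
      calc Real.sin θ ^ (d - 1) * (2 * (1 - Real.cos θ) + s) ^ (-((d : ℝ) / 2) - 1)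
          ≤ (2 * (1 - Real.cos θ) + s) ^ (((d:ℝ) - 1)/2)
              * (2 * (1 - Real.cos θ) + s) ^ (-((d : ℝ) / 2) - 1) :=
            mul_le_mul_of_nonneg_right hpow (Real.rpow_nonneg hU.le _)
        _ = (2 * (1 - Real.cos θ) + s) ^ (-(3:ℝ)/2) := by
            rw [← Real.rpow_add hU]
            congr 1
            ring
    have hhalf : θ / Real.pi ≤ Real.sin (θ / 2) := by
      have h := Real.mul_le_sin (x := θ/2) (by linarith [hθ.1]) (by linarith [hθ.2])
      calc θ / Real.pi = 2 / Real.pi * (θ / 2) := by ring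
        _ ≤ Real.sin (θ / 2) := h
    have hcosid : Real.cos θ = 1 - 2 * Real.sin (θ / 2) ^ 2 := by
      have hcs := Real.cos_sq (θ / 2)
      rw [show 2 * (θ / 2) = θ by ring] at hcs
      have hpy := Real.sin_sq_add_cos_sq (θ / 2)
      linarith
    have hθπ : 0 ≤ θ / Real.pi := div_nonneg hθ.1 Real.pi_pos.le
    have hsq : (θ / Real.pi) ^ 2 ≤ Real.sin (θ / 2) ^ 2 := pow_le_pow_left₀ hθπ hhalf 2
    have h7 : θ ^ 2 ≤ Real.pi ^ 2 * Real.sin (θ / 2) ^ 2 := by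
      calc θ ^ 2 = Real.pi ^ 2 * (θ / Real.pi) ^ 2 := by
            field_simp
        _ ≤ Real.pi ^ 2 * Real.sin (θ / 2) ^ 2 :=
            mul_le_mul_of_nonneg_left hsq (by positivity)
    have hgeo : 4 / Real.pi ^ 2 * (θ ^ 2 + s) ≤ 2 * (1 - Real.cos θ) + s := by
      rw [hcosid, div_mul_eq_mul_div, div_le_iff₀ (by positivity)]
      nlinarith [h7, hπ2, hs]
    calc Real.sin θ ^ (d - 1) * (2 * (1 - Real.cos θ) + s) ^ (-((d : ℝ) / 2) - 1)
        ≤ (2 * (1 - Real.cos θ) + s) ^ (-(3:ℝ)/2) := hstep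
      _ ≤ (4 / Real.pi ^ 2 * (θ ^ 2 + s)) ^ (-(3:ℝ)/2) :=
          Real.rpow_le_rpow_of_nonpos (by positivity) hgeo (by norm_num)
      _ = K * (θ ^ 2 + s) ^ (-(3:ℝ)/2) := by
          rw [Real.mul_rpow (by positivity) (by positivity)]
  calc ∫ θ in (0:ℝ)..Real.pi,
        Real.sin θ ^ (d - 1) * (2 * (1 - Real.cos θ) + s) ^ (-((d : ℝ) / 2) - 1)
      ≤ ∫ θ in (0:ℝ)..Real.pi, K * (θ ^ 2 + s) ^ (-(3:ℝ)/2) := hmono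
    _ = K * ∫ θ in (0:ℝ)..Real.pi, (θ ^ 2 + s) ^ (-(3:ℝ)/2) := by
        rw [intervalIntegral.integral_const_mul]
    _ ≤ K * (1 / s) := mul_le_mul_of_nonneg_left (step3 hs) hKpos.le

private lemma step5 (d : ℕ) (hd : 3 ≤ d) {s : ℝ} (hs : 0 < s) :
    ∫ θ in (0:ℝ)..Real.pi,
        Real.sin θ ^ (d - 1) * (2 * (1 - Real.cos θ) + s) ^ (-((d : ℝ) / 2) - 1)
      ≤ Real.pi * (1 / s ^ ((d : ℝ) / 2 + 1)) := by
  have hint1 : IntervalIntegrable (fun θ : ℝ =>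
      Real.sin θ ^ (d - 1) * (2 * (1 - Real.cos θ) + s) ^ (-((d : ℝ) / 2) - 1))
      volume 0 Real.pi :=
    ((Real.continuous_sin.pow _).mul (U_cont hs _)).intervalIntegrable _ _
  have hval : s ^ (-((d : ℝ) / 2) - 1) = 1 / s ^ ((d : ℝ) / 2 + 1) := by
    rw [show -((d : ℝ) / 2) - 1 = -((d : ℝ) / 2 + 1) by ring, Real.rpow_neg hs.le, one_div]
  have hmono : ∫ θ in (0:ℝ)..Real.pi,
        Real.sin θ ^ (d - 1) * (2 * (1 - Real.cos θ) + s) ^ (-((d : ℝ) / 2) - 1)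
      ≤ ∫ _ in (0:ℝ)..Real.pi, s ^ (-((d : ℝ) / 2) - 1) := by
    apply intervalIntegral.integral_mono_on Real.pi_pos.le hint1 intervalIntegrable_const
    intro θ hθ
    have hU : 0 < 2 * (1 - Real.cos θ) + s := U_pos hs θ
    have hsin0 : 0 ≤ Real.sin θ := Real.sin_nonneg_of_nonneg_of_le_pi hθ.1 hθ.2
    have h1 : Real.sin θ ^ (d - 1) ≤ 1 := pow_le_one₀ hsin0 (Real.sin_le_one θ)
    have h2 : (2 * (1 - Real.cos θ) + s) ^ (-((d : ℝ) / 2) - 1)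
        ≤ s ^ (-((d : ℝ) / 2) - 1) := by
      apply Real.rpow_le_rpow_of_nonpos hs
        (by nlinarith [Real.cos_le_one θ])
      have : (0:ℝ) ≤ (d : ℝ) / 2 := by positivity
      linarith
    calc Real.sin θ ^ (d - 1) * (2 * (1 - Real.cos θ) + s) ^ (-((d : ℝ) / 2) - 1)
        ≤ 1 * s ^ (-((d : ℝ) / 2) - 1) :=
          mul_le_mul h1 h2 (Real.rpow_nonneg hU.le _) one_pos.le
      _ = s ^ (-((d : ℝ) / 2) - 1) := one_mul _
  rw [intervalIntegral.integral_const, smul_eq_mul, sub_zero, hval] at hmono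
  exact hmono

theorem Fd_deriv_bound (d : ℕ) (hd : 3 ≤ d) :
    ∃ C > (0:ℝ), ∀ s : ℝ, 0 < s →
      |deriv (fun s' : ℝ => ∫ θ in (0:ℝ)..Real.pi,
          Real.cos θ * Real.sin θ ^ (d - 3) /
            (2 * (1 - Real.cos θ) + s') ^ ((d : ℝ) / 2 - 1)) s|
        ≤ C * min (1 / s) (1 / s ^ ((d : ℝ) / 2 + 1)) := by
  have hd3 : (3:ℝ) ≤ (d:ℝ) := by exact_mod_cast hd
  have hr0 : (0:ℝ) < (d:ℝ)/2 := by linarith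
  have hKpos : (0:ℝ) < ((4:ℝ) / Real.pi ^ 2) ^ (-(3:ℝ)/2) :=
    Real.rpow_pos_of_pos (by positivity) _
  set K : ℝ := ((4:ℝ) / Real.pi ^ 2) ^ (-(3:ℝ)/2) with hK
  refine ⟨(d:ℝ)/2 * Real.pi + (d:ℝ)/2 * K + 1, by positivity, ?_⟩
  intro s hs
  have heq : deriv (fun s' : ℝ => ∫ θ in (0:ℝ)..Real.pi,
          Real.cos θ * Real.sin θ ^ (d - 3) /
            (2 * (1 - Real.cos θ) + s') ^ ((d : ℝ) / 2 - 1)) s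
      = deriv (fun x : ℝ => ∫ θ in (0:ℝ)..Real.pi,
          Real.sin θ ^ (d - 1) * (2 * (1 - Real.cos θ) + x) ^ (-((d : ℝ) / 2))) s := by
    apply Filter.EventuallyEq.deriv_eq
    filter_upwards [Ioi_mem_nhds hs] with x hx using step1 d hd hx
  rw [heq, (step2 d hd hs).deriv]
  have hDI : (∫ θ in (0:ℝ)..Real.pi, Real.sin θ ^ (d - 1) *
        (-((d : ℝ) / 2) * (2 * (1 - Real.cos θ) + s) ^ (-((d : ℝ) / 2) - 1)))
      = -((d:ℝ)/2) * ∫ θ in (0:ℝ)..Real.pi,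
          Real.sin θ ^ (d - 1) * (2 * (1 - Real.cos θ) + s) ^ (-((d : ℝ) / 2) - 1) := by
    rw [← intervalIntegral.integral_const_mul]
    apply intervalIntegral.integral_congr
    intro θ _
    ring
  set I : ℝ := ∫ θ in (0:ℝ)..Real.pi,
      Real.sin θ ^ (d - 1) * (2 * (1 - Real.cos θ) + s) ^ (-((d : ℝ) / 2) - 1) with hI
  have hInn : 0 ≤ I := by
    apply intervalIntegral.integral_nonneg Real.pi_pos.le
    intro θ hθ
    have := Real.sin_nonneg_of_nonneg_of_le_pi hθ.1 hθ.2
    exact mul_nonneg (pow_nonneg this _) (Real.rpow_nonneg (U_pos hs θ).le _)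
  rw [hDI, abs_mul, abs_neg, abs_of_nonneg hr0.le, abs_of_nonneg hInn]
  rw [mul_min_of_nonneg _ _ (by positivity : (0:ℝ) ≤ (d:ℝ)/2 * Real.pi + (d:ℝ)/2 * K + 1)]
  have h1s : (0:ℝ) < 1 / s := by positivity
  have h2s : (0:ℝ) < 1 / s ^ ((d : ℝ) / 2 + 1) := by
    have := Real.rpow_pos_of_pos hs ((d : ℝ) / 2 + 1)
    positivity
  refine le_min ?_ ?_
  · calc (d:ℝ)/2 * I ≤ (d:ℝ)/2 * (K * (1/s)) :=
        mul_le_mul_of_nonneg_left (step4 d hd hs) hr0.le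
      _ ≤ ((d:ℝ)/2 * Real.pi + (d:ℝ)/2 * K + 1) * (1/s) := by
        nlinarith [mul_nonneg (mul_nonneg hr0.le Real.pi_pos.le) h1s.le, h1s.le]
  · calc (d:ℝ)/2 * I ≤ (d:ℝ)/2 * (Real.pi * (1 / s ^ ((d : ℝ) / 2 + 1))) :=
        mul_le_mul_of_nonneg_left (step5 d hd hs) hr0.le
      _ ≤ ((d:ℝ)/2 * Real.pi + (d:ℝ)/2 * K + 1) * (1 / s ^ ((d : ℝ) / 2 + 1)) := by
        nlinarith [mul_nonneg (mul_nonneg hr0.le hKpos.le) h2s.le, h2s.le]
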